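/- Let $S_1,\ldots,S_M$ be independent exponential random variables where $S_i$ has rate $r_i/\mathbb{E}[T]$ with $r_i > 0$ and $\mathbb{E}[T] > 0$, and let $t_s \geq 0$. Then $\mathbb{P}(S_i \geq S_l + t_s \text{ for all } i \neq l) = \frac{r_l e^{r_l t_s/\mathbb{E}[T]}}{e^{(\sum_{i=1}^M r_i) t_s/\mathbb{E}[T]} \sum_{i=1}^M r_i}$. -/

import Mathlib

open MeasureTheory ProbabilityTheory Set

lemma expMeasure_withDensity (c : ℝ) :
    expMeasure c = MeasureTheory.volume.withDensity (exponentialPDF c) := rfl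

lemma expMeasure_Ici {c t : ℝ} (hc : 0 < c) (ht : 0 ≤ t) :
    expMeasure c (Ici t) = ENNReal.ofReal (Real.exp (-(c * t))) := by
  rw [expMeasure_withDensity, withDensity_apply _ measurableSet_Ici]
  have h1 : ∫⁻ y in Iic t, exponentialPDF c y = ENNReal.ofReal (1 - Real.exp (-(c * t))) := by
    rw [lintegral_exponentialPDF_eq_antiDeriv hc, if_pos ht]
  have h2 : (∫⁻ y in Iic t, exponentialPDF c y) + ∫⁻ y in Ioi t, exponentialPDF c y = 1 := by
    have := lintegral_add_compl (exponentialPDF c) (measurableSet_Iic (a := t))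
      (μ := MeasureTheory.volume)
    rw [compl_Iic] at this
    rw [this, lintegral_exponentialPDF_eq_one hc]
  have hIci : ∫⁻ y in Ici t, exponentialPDF c y = ∫⁻ y in Ioi t, exponentialPDF c y :=
    setLIntegral_congr (Ioi_ae_eq_Ici (a := t) (μ := MeasureTheory.volume)).symm
  have hle : Real.exp (-(c * t)) ≤ 1 := by
    rw [Real.exp_le_one_iff]
    nlinarith
  have h3 : ENNReal.ofReal (1 - Real.exp (-(c * t))) + ENNReal.ofReal (Real.exp (-(c * t))) = 1 := by
    rw [← ENNReal.ofReal_add (by linarith) (Real.exp_nonneg _)]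
    norm_num
  rw [hIci]
  rw [h1] at h2
  rw [← h3] at h2
  exact (ENNReal.add_right_inj ENNReal.ofReal_ne_top).mp (h2.trans rfl) |>.symm ▸ rfl

/-- If `S 1, …, S M` are independent exponential random variables, `S i` with rate
`r i / E[T]`, then the probability that source `l` wins channel access without
collision, i.e. `S i ≥ S l + t_s` for all `i ≠ l`, equals
`r l * exp(r l * t_s / E[T]) / (exp((∑ r i) * t_s / E[T]) * ∑ r i)`. -/
theorem stmt_4 {Ω : Type*} [MeasureSpace Ω] (hΩ : IsProbabilityMeasure (ℙ : Measure Ω))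
    (M : ℕ) (hM : 0 < M) (r : Fin M → ℝ) (hr : ∀ i, 0 < r i)
    (ET ts : ℝ) (hET : 0 < ET) (hts : 0 ≤ ts)
    (S : Fin M → Ω → ℝ) (hmeas : ∀ i, Measurable (S i))
    (hindep : iIndepFun S ℙ)
    (hexp : ∀ i, Measure.map (S i) ℙ = expMeasure (r i / ET))
    (l : Fin M) :
    ℙ {ω | ∀ i, i ≠ l → S l ω + ts ≤ S i ω} =
      ENNReal.ofReal (r l * Real.exp (r l * ts / ET) /
        (Real.exp ((∑ i, r i) * ts / ET) * ∑ i, r i)) := by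
  classical
  set lam : Fin M → ℝ := fun i => r i / ET with hlam
  have hlampos : ∀ i, 0 < lam i := fun i => div_pos (hr i) hET
  set T : Finset (Fin M) := Finset.univ.erase l with hT
  have hmemT : ∀ i : Fin M, i ∈ T ↔ i ≠ l := by simp [hT]
  set a : ℝ := lam l with ha
  set b : ℝ := ∑ i ∈ T, lam i with hb
  have hb0 : 0 ≤ b := Finset.sum_nonneg fun i _ => (hlampos i).le
  have hab : 0 < a + b := by have := hlampos l; linarith
  set V : Ω → ((i : T) → ℝ) := fun ω (i : T) => S i ω with hV
  have hVmeas : Measurable V := measurable_pi_iff.2 fun i => hmeas i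
  set B : Set (ℝ × ((i : T) → ℝ)) := {p | ∀ i : T, p.1 + ts ≤ p.2 i} with hB
  have hBmeas : MeasurableSet B := by
    have hBi : B = ⋂ i : T, {p : ℝ × ((i : T) → ℝ) | p.1 + ts ≤ p.2 i} := by
      ext p; simp [hB]
    rw [hBi]
    exact MeasurableSet.iInter fun i =>
      measurableSet_le (measurable_fst.add_const ts) ((measurable_pi_apply i).comp measurable_snd)
  have hEvent : {ω | ∀ i, i ≠ l → S l ω + ts ≤ S i ω} = (fun ω => (S l ω, V ω)) ⁻¹' B := by
    ext ω
    simp only [Set.mem_setOf_eq, Set.mem_preimage, hB, hV]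
    constructor
    · rintro h ⟨i, hi⟩; exact h i ((hmemT i).1 hi)
    · intro h i hi; exact h ⟨i, (hmemT i).2 hi⟩
  have hST : Disjoint ({l} : Finset (Fin M)) T := by simp [hT]
  have hIndep : IndepFun (S l) V ℙ := by
    have h0 := hindep.indepFun_finset {l} T hST hmeas
    exact h0.comp (φ := fun v : ((i : ({l} : Finset (Fin M))) → ℝ) =>
      v ⟨l, Finset.mem_singleton_self l⟩) (ψ := id) (measurable_pi_apply _) measurable_id
  have hmap : Measure.map (fun ω => (S l ω, V ω)) ℙ
      = (expMeasure a).prod (Measure.map V ℙ) := by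
    rw [← hexp l]
    exact (indepFun_iff_map_prod_eq_prod_map_map (hmeas l).aemeasurable
      hVmeas.aemeasurable).1 hIndep
  haveI : IsProbabilityMeasure (Measure.map V ℙ) := Measure.isProbabilityMeasure_map hVmeas.aemeasurable
  have hinner : ∀ x : ℝ, 0 ≤ x → (Measure.map V ℙ) (Prod.mk x ⁻¹' B)
      = ENNReal.ofReal (Real.exp (-(b * (x + ts)))) := by
    intro x hx
    rw [Measure.map_apply hVmeas (hBmeas.preimage measurable_prodMk_left)]
    have hpre : V ⁻¹' (Prod.mk x ⁻¹' B) = ⋂ i ∈ T, S i ⁻¹' Ici (x + ts) := by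
      ext ω
      simp only [Set.mem_preimage, hB, hV, Set.mem_setOf_eq, Set.mem_iInter, Set.mem_Ici,
        Subtype.forall]
    rw [hpre, hindep.meas_biInter (S := T)
      (fun i hi => ⟨Ici (x + ts), measurableSet_Ici, rfl⟩)]
    have hterm : ∀ i ∈ T, ℙ (S i ⁻¹' Ici (x + ts))
        = ENNReal.ofReal (Real.exp (-(lam i * (x + ts)))) := by
      intro i hi
      rw [← Measure.map_apply (hmeas i) measurableSet_Ici, hexp i,
        expMeasure_Ici (hlampos i) (by linarith)]
    rw [Finset.prod_congr rfl hterm,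
      ← ENNReal.ofReal_prod_of_nonneg (fun i _ => Real.exp_nonneg _)]
    congr 1
    rw [← Real.exp_sum]
    congr 1
    rw [Finset.sum_mul]
    exact Finset.sum_neg_distrib _
  set c : ℝ := a / (a + b) * Real.exp (-(b * ts)) with hc
  have hmain : ℙ ((fun ω => (S l ω, V ω)) ⁻¹' B) = ENNReal.ofReal c := by
    rw [← Measure.map_apply ((hmeas l).prodMk hVmeas) hBmeas, hmap,
      Measure.prod_apply hBmeas, expMeasure_withDensity,
      lintegral_withDensity_eq_lintegral_mul _
        (show Measurable (exponentialPDF a) from (measurable_exponentialPDFReal a).ennreal_ofReal)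
        (measurable_measure_prodMk_left hBmeas)]
    have hpt : ∀ x : ℝ, (exponentialPDF a * fun x => (Measure.map V ℙ) (Prod.mk x ⁻¹' B)) x
        = ENNReal.ofReal c * exponentialPDF (a + b) x := by
      intro x
      rcases lt_or_ge x 0 with hx | hx
      · simp [exponentialPDF_of_neg hx]
      · rw [Pi.mul_apply, hinner x hx, exponentialPDF_of_nonneg hx,
          exponentialPDF_of_nonneg hx,
          ← ENNReal.ofReal_mul (mul_nonneg (hlampos l).le (Real.exp_nonneg _)),
          ← ENNReal.ofReal_mul (mul_nonneg (div_nonneg (hlampos l).le hab.le) (Real.exp_nonneg _))]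
        congr 1
        have hcab : c * (a + b) = a * Real.exp (-(b * ts)) := by
          rw [hc]; field_simp
        calc a * Real.exp (-(a * x)) * Real.exp (-(b * (x + ts)))
            = a * Real.exp (-(b * ts)) * Real.exp (-((a + b) * x)) := by
              rw [mul_assoc, ← Real.exp_add, mul_assoc, ← Real.exp_add]
              ring_nf
          _ = c * ((a + b) * Real.exp (-((a + b) * x))) := by
              rw [← mul_assoc, ← hcab]
    rw [lintegral_congr hpt, lintegral_const_mul _ (show Measurable (exponentialPDF (a+b)) from (measurable_exponentialPDFReal (a+b)).ennreal_ofReal),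
      lintegral_exponentialPDF_eq_one hab, mul_one]
  rw [hEvent, hmain]
  congr 1
  -- real computation
  have hRtot : (∑ i, r i) = r l + ∑ i ∈ T, r i := by
    rw [hT, Finset.add_sum_erase _ _ (Finset.mem_univ l)]
  have hRT0 : 0 ≤ ∑ i ∈ T, r i := Finset.sum_nonneg fun i _ => (hr i).le
  have hRpos : 0 < ∑ i, r i := by rw [hRtot]; have := hr l; linarith
  have hbval : b = (∑ i ∈ T, r i) / ET := by
    rw [hb, hlam, ← Finset.sum_div]
  have habval : a + b = (∑ i, r i) / ET := by
    rw [ha, hbval, hlam, hRtot]; ring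
  have hcval : c = r l / (∑ i, r i) * Real.exp (-((∑ i ∈ T, r i) / ET * ts)) := by
    rw [hc, habval, hbval]
    have haval : a = r l / ET := rfl
    rw [haval]
    congr 1
    rw [div_div_div_cancel_right₀]
    exact hET.ne'
  have e1 : Real.exp (r l * ts / ET) / Real.exp ((∑ i, r i) * ts / ET)
      = Real.exp (-((∑ i ∈ T, r i) / ET * ts)) := by
    rw [← Real.exp_sub]
    congr 1
    rw [hRtot]
    field_simp
    ring
  have e3 : r l * Real.exp (r l * ts / ET) / (Real.exp ((∑ i, r i) * ts / ET) * ∑ i, r i)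
      = r l / (∑ i, r i) * (Real.exp (r l * ts / ET) / Real.exp ((∑ i, r i) * ts / ET)) := by
    ring
  rw [hcval, e3, e1]
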